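/- (Proposition C.2 for two tasks.) Let T = 2 and assume X = D_1 ∪ D_2 with D_1 and D_2 disjoint. Suppose the family {φ_ρ} is locally linearly independent, in the summable sense, on D_1 and on D_2. Then the task functions {f_1, f_2} satisfy the task arithmetic property on {D_1, D_2} (i.e., f_1(x) + f_2(x) = f_1(x) for all x ∈ D_1 and f_1(x) + f_2(x) = f_2(x) for all x ∈ D_2) if and only if for every t ∈ {1,2} and every ρ ∈ ℕ, either c_{t,ρ} = 0 or the support of φ_ρ is contained in D_t (i.e., φ_ρ(x) = 0 for all x ∉ D_t). -/
import Mathlib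


/-- Proposition C.2 for two tasks: with `X = D1 ∪ D2` disjoint and `{φ ρ}`
locally linearly independent (in the summable sense) on `D1` and on `D2`, the task
functions `f1, f2` satisfy the task arithmetic property on `{D1, D2}` if and only if for
every task and every `ρ`, either the coefficient vanishes or `φ ρ` is supported in the
corresponding domain. -/
theorem task_arithmetic_iff_localization_two_tasks
    {X : Type*}
    (D1 D2 : Set X) (hdisj : Disjoint D1 D2) (hcover : D1 ∪ D2 = Set.univ)
    (φ : ℕ → X → ℝ) (c1 c2 : ℕ → ℝ)
    (hsum1 : ∀ x : X, Summable fun ρ => c1 ρ * φ ρ x)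
    (hsum2 : ∀ x : X, Summable fun ρ => c2 ρ * φ ρ x)
    (f1 f2 : X → ℝ)
    (hf1 : ∀ x : X, f1 x = ∑' ρ, c1 ρ * φ ρ x)
    (hf2 : ∀ x : X, f2 x = ∑' ρ, c2 ρ * φ ρ x)
    (hLLI1 : ∀ b : ℕ → ℝ,
      (∀ x ∈ D1, Summable fun ρ => b ρ * φ ρ x) →
      (∀ x ∈ D1, ∑' ρ, b ρ * φ ρ x = 0) →
      ∀ ρ : ℕ, b ρ = 0 ∨ ∀ x ∈ D1, φ ρ x = 0)
    (hLLI2 : ∀ b : ℕ → ℝ,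
      (∀ x ∈ D2, Summable fun ρ => b ρ * φ ρ x) →
      (∀ x ∈ D2, ∑' ρ, b ρ * φ ρ x = 0) →
      ∀ ρ : ℕ, b ρ = 0 ∨ ∀ x ∈ D2, φ ρ x = 0) :
    ((∀ x ∈ D1, f1 x + f2 x = f1 x) ∧ (∀ x ∈ D2, f1 x + f2 x = f2 x)) ↔
      (∀ ρ : ℕ, (c1 ρ = 0 ∨ ∀ x ∉ D1, φ ρ x = 0) ∧
                (c2 ρ = 0 ∨ ∀ x ∉ D2, φ ρ x = 0)) := by

  have hmem : ∀ x : X, x ∈ D1 ∨ x ∈ D2 := by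
    intro x
    have : x ∈ D1 ∪ D2 := by rw [hcover]; trivial
    exact this
  have hnot1 : ∀ x : X, x ∉ D1 → x ∈ D2 := fun x hx => (hmem x).resolve_left hx
  have hnot2 : ∀ x : X, x ∉ D2 → x ∈ D1 := fun x hx => (hmem x).resolve_right hx
  have h12 : ∀ x ∈ D1, x ∉ D2 := fun x hx => Set.disjoint_left.mp hdisj hx
  have h21 : ∀ x ∈ D2, x ∉ D1 := fun x hx => Set.disjoint_right.mp hdisj hx
  constructor
  · rintro ⟨h1, h2⟩ ρ
    have hf2zero : ∀ x ∈ D1, ∑' ρ, c2 ρ * φ ρ x = 0 := by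
      intro x hx
      have := h1 x hx
      rw [hf2 x] at this
      linarith
    have hf1zero : ∀ x ∈ D2, ∑' ρ, c1 ρ * φ ρ x = 0 := by
      intro x hx
      have := h2 x hx
      rw [hf1 x] at this
      linarith
    have hc1 := hLLI2 c1 (fun x _ => hsum1 x) hf1zero ρ
    have hc2 := hLLI1 c2 (fun x _ => hsum2 x) hf2zero ρ
    constructor
    · rcases hc1 with h | h
      · exact Or.inl h
      · exact Or.inr fun x hx => h x (hnot1 x hx)
    · rcases hc2 with h | h
      · exact Or.inl h
      · exact Or.inr fun x hx => h x (hnot2 x hx)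
  · intro h
    constructor
    · intro x hx
      have : ∑' ρ, c2 ρ * φ ρ x = 0 := by
        have hz : (fun ρ => c2 ρ * φ ρ x) = fun _ => (0:ℝ) := by
          funext ρ
          rcases (h ρ).2 with hc | hφ
          · simp [hc]
          · rw [hφ x (h12 x hx)]; ring
        rw [hz, tsum_zero]
      rw [hf2 x, this]; ring
    · intro x hx
      have : ∑' ρ, c1 ρ * φ ρ x = 0 := by
        have hz : (fun ρ => c1 ρ * φ ρ x) = fun _ => (0:ℝ) := by
          funext ρ
          rcases (h ρ).1 with hc | hφ
          · simp [hc]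
          · rw [hφ x (h21 x hx)]; ring
        rw [hz, tsum_zero]
      rw [hf1 x, this]; ring
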